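/- Let M ≥ 2 and let (X_1, …, X_M) be a zero-mean square-integrable real random vector whose M×M covariance matrix K = (E[X_i X_j]) is positive definite. For i = 2, …, M let K_{i−1} denote the 1×(i−1) row vector K_{i−1} = Cov(X_i, (X_1,…,X_{i−1})) · Cov((X_1,…,X_{i−1}))^{−1}, and let B_i = X_i − K_{i−1}(X_1,…,X_{i−1})^T be the linear MMSE innovation. Let N_2, …, N_M be zero-mean square-integrable real random variables with E[N_i²] = E[B_i²] for each i, such that X_1, N_2, …, N_M are mutually independent. Define recursively X̃_1 = X_1 and X̃_i = K_{i−1}(X̃_1,…,X̃_{i−1})^T + N_i for i = 2, …, M. Then (X̃_1, …, X̃_M) is zero-mean and its covariance matrix equals K, i.e. E[X̃_i X̃_j] = E[X_i X_j] for all i, j. -/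

import Mathlib

open MeasureTheory ProbabilityTheory

lemma my_mul_int {Ω : Type*} [MeasurableSpace Ω] {μ : Measure Ω} {f g : Ω → ℝ}
    (hf : MemLp f 2 μ) (hg : MemLp g 2 μ) :
    Integrable (fun ω => f ω * g ω) μ := by
  refine Integrable.mono' ((hf.integrable_sq.add hg.integrable_sq).div_const 2)
    (hf.1.mul hg.1) ?_
  filter_upwards with ω
  simp only [Pi.add_apply]
  rw [Real.norm_eq_abs, abs_mul]
  nlinarith [sq_abs (f ω), sq_abs (g ω), sq_nonneg (|f ω| - |g ω|),
    abs_nonneg (f ω), abs_nonneg (g ω)]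


/-- Gram–Schmidt orthogonalization vs. sequential (dithered) quantization, scalar case:
a sequential additive-independent-noise system driven by `X 0`, with noise variances
matching the linear MMSE innovation variances, reproduces the prescribed covariance
matrix `K`. -/
theorem sequential_quantization_reproduces_covariance
    {Ω : Type*} [MeasurableSpace Ω] (μ : Measure Ω) [IsProbabilityMeasure μ]
    (M : ℕ) (hM : 2 ≤ M) [NeZero M]
    (X : Fin M → Ω → ℝ)
    (hX2 : ∀ i, MemLp (X i) 2 μ)
    (hXmean : ∀ i, ∫ ω, X i ω ∂μ = 0)
    (K : Matrix (Fin M) (Fin M) ℝ)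
    (hK : ∀ i j, K i j = ∫ ω, X i ω * X j ω ∂μ)
    (hKpd : K.PosDef)
    -- `c i` is the row vector of linear MMSE coefficients of `X i` given `X 0, …, X (i-1)`,
    -- characterized by the normal equations (the leading principal minors of `K` are
    -- invertible since `K` is positive definite, so these determine `c i` uniquely).
    (c : Fin M → Fin M → ℝ)
    (hc : ∀ i k : Fin M, k < i →
      ∑ j ∈ Finset.Iio i, c i j * K j k = K i k)
    -- the linear MMSE innovations
    (B : Fin M → Ω → ℝ)
    (hB : ∀ i : Fin M, B i = fun ω => X i ω - ∑ j ∈ Finset.Iio i, c i j * X j ω)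
    -- the independent noises
    (N : Fin M → Ω → ℝ)
    (hN2 : ∀ i, MemLp (N i) 2 μ)
    (hNmean : ∀ i, ∫ ω, N i ω ∂μ = 0)
    (hNvar : ∀ i : Fin M, 0 < i → ∫ ω, (N i ω) ^ 2 ∂μ = ∫ ω, (B i ω) ^ 2 ∂μ)
    -- `X 0, N 1, …, N (M-1)` are mutually independent
    (hIndep : iIndepFun
      (fun i : Fin M => if i = 0 then X 0 else N i) μ)
    -- the sequentially generated process
    (Xt : Fin M → Ω → ℝ)
    (hXt0 : Xt 0 = X 0)
    (hXtrec : ∀ i : Fin M, 0 < i →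
      Xt i = fun ω => (∑ j ∈ Finset.Iio i, c i j * Xt j ω) + N i ω) :
    (∀ i, ∫ ω, Xt i ω ∂μ = 0) ∧
    (∀ i j, ∫ ω, Xt i ω * Xt j ω ∂μ = K i j) := by
  classical
  set Z : Fin M → Ω → ℝ := fun k => if k = 0 then X 0 else N k with hZdef
  have hZ2 : ∀ k, MemLp (Z k) 2 μ := by
    intro k
    by_cases h : k = 0
    · simpa [hZdef, h] using hX2 0
    · simpa [hZdef, h] using hN2 k
  have hZint : ∀ k, Integrable (Z k) μ := fun k => (hZ2 k).integrable one_le_two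
  have hZmean : ∀ k, ∫ ω, Z k ω ∂μ = 0 := by
    intro k
    by_cases h : k = 0
    · simpa [hZdef, h] using hXmean 0
    · simpa [hZdef, h] using hNmean k
  have hZorth : ∀ k l, k ≠ l → ∫ ω, Z k ω * Z l ω ∂μ = 0 := by
    intro k l hkl
    have hind : IndepFun (Z k) (Z l) μ := hIndep.indepFun hkl
    have := hind.integral_mul_eq_mul_integral (hZint k).1 (hZint l).1
    simp only [Pi.mul_apply] at this
    rw [show (fun ω => Z k ω * Z l ω) = Z k * Z l from rfl] at *
    rw [this, hZmean k, hZmean l, mul_zero]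
  -- representation of Xt as linear combination of Z
  have hrep : ∀ (n : ℕ) (i : Fin M), i.val = n →
      ∃ a : Fin M → ℝ, (∀ k, i < k → a k = 0) ∧ ∀ ω, Xt i ω = ∑ k, a k * Z k ω := by
    intro n
    induction n using Nat.strong_induction_on with
    | _ n IH =>
      intro i hn
      by_cases hi0 : i = 0
      · subst hi0
        refine ⟨fun k => if k = 0 then 1 else 0, ?_, ?_⟩
        · intro k hk
          have : k ≠ 0 := (Fin.pos_iff_ne_zero' k).mp hk
          simp [this]
        · intro ω
          rw [Finset.sum_eq_single 0]
          · simp [hXt0, hZdef]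
          · intro b _ hb; simp [hb]
          · simp
      · have hi : 0 < i := (Fin.pos_iff_ne_zero' i).mpr hi0
        have IH' : ∀ j : Fin M, j < i → ∃ a : Fin M → ℝ,
            (∀ k, j < k → a k = 0) ∧ ∀ ω, Xt j ω = ∑ k, a k * Z k ω := by
          intro j hj
          refine IH j.val ?_ j rfl
          have := Fin.lt_iff_val_lt_val.mp hj
          omega
        choose a ha hXa using IH'
        refine ⟨fun k => (∑ j ∈ Finset.Iio i, if hj : j < i then c i j * a j hj k else 0)
            + (if k = i then 1 else 0), ?_, ?_⟩
        · intro k hk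
          have h1 : ∀ j ∈ Finset.Iio i, (if hj : j < i then c i j * a j hj k else 0) = 0 := by
            intro j hj
            rw [dif_pos (Finset.mem_Iio.mp hj)]
            rw [ha j (Finset.mem_Iio.mp hj) k (lt_trans (Finset.mem_Iio.mp hj) hk), mul_zero]
          have hki : k ≠ i := fun h => absurd (h ▸ hk) (lt_irrefl _)
          simp only []
          rw [Finset.sum_eq_zero h1, if_neg hki, add_zero]
        · intro ω
          have hNZ : Z i = N i := by simp [hZdef, hi0]
          have e1 : ∀ k : Fin M,
              ((∑ j ∈ Finset.Iio i, if hj : j < i then c i j * a j hj k else 0)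
                + (if k = i then 1 else 0)) * Z k ω
              = (∑ j ∈ Finset.Iio i, if hj : j < i then c i j * (a j hj k * Z k ω) else 0)
                + (if k = i then 1 else 0) * Z k ω := by
            intro k
            rw [add_mul, Finset.sum_mul]
            congr 1
            refine Finset.sum_congr rfl fun j hj => ?_
            rw [dif_pos (Finset.mem_Iio.mp hj), dif_pos (Finset.mem_Iio.mp hj), mul_assoc]
          rw [hXtrec i hi]
          simp only []
          symm
          rw [Finset.sum_congr rfl fun k _ => e1 k, Finset.sum_add_distrib, Finset.sum_comm]
          congr 1
          · refine Finset.sum_congr rfl fun j hj => ?_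
            have hj' := Finset.mem_Iio.mp hj
            rw [Finset.sum_congr rfl fun k _ => dif_pos hj', ← Finset.mul_sum, ← hXa j hj']
          · rw [Finset.sum_eq_single i]
            · rw [if_pos rfl, one_mul, hNZ]
            · intro b _ hb; rw [if_neg hb, zero_mul]
            · intro h; exact absurd (Finset.mem_univ i) h
  have hXt2 : ∀ i, MemLp (Xt i) 2 μ := by
    intro i
    obtain ⟨a, -, hXa⟩ := hrep i.val i rfl
    rw [show Xt i = fun ω => ∑ k, a k * Z k ω from funext hXa]
    exact memLp_finset_sum _ fun k _ => (hZ2 k).const_mul (a k)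
  have hXtmean : ∀ i, ∫ ω, Xt i ω ∂μ = 0 := by
    intro i
    obtain ⟨a, -, hXa⟩ := hrep i.val i rfl
    rw [show (fun ω => Xt i ω) = fun ω => ∑ k, a k * Z k ω from funext hXa,
      integral_finset_sum _ fun k _ => (hZint k).const_mul (a k)]
    refine Finset.sum_eq_zero fun k _ => ?_
    rw [integral_const_mul, hZmean, mul_zero]
  have hNorth : ∀ i j : Fin M, 0 < i → j < i → ∫ ω, N i ω * Xt j ω ∂μ = 0 := by
    intro i j hi hj
    obtain ⟨a, ha, hXa⟩ := hrep j.val j rfl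
    have hNZ : N i = Z i := by
      have : i ≠ 0 := (Fin.pos_iff_ne_zero' i).mp hi
      simp [hZdef, this]
    have e : (fun ω => N i ω * Xt j ω) = fun ω => ∑ k, a k * (Z i ω * Z k ω) := by
      funext ω
      rw [hXa ω, hNZ, Finset.mul_sum]
      exact Finset.sum_congr rfl fun k _ => by ring
    rw [e, integral_finset_sum _ fun k _ => (my_mul_int (hZ2 i) (hZ2 k)).const_mul (a k)]
    refine Finset.sum_eq_zero fun k _ => ?_
    rw [integral_const_mul]
    by_cases hk : k = i
    · subst hk; rw [ha k hj, zero_mul]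
    · rw [hZorth i k (fun h => hk h.symm), mul_zero]
  have key : ∀ (i : Fin M) (g : Ω → ℝ), 0 < i → MemLp g 2 μ →
      ∫ ω, Xt i ω * g ω ∂μ
        = (∑ k ∈ Finset.Iio i, c i k * ∫ ω, Xt k ω * g ω ∂μ) + ∫ ω, N i ω * g ω ∂μ := by
    intro i g hi hg
    have e : (fun ω => Xt i ω * g ω)
        = fun ω => (∑ k ∈ Finset.Iio i, c i k * (Xt k ω * g ω)) + N i ω * g ω := by
      funext ω
      rw [hXtrec i hi]
      simp only []
      rw [add_mul, Finset.sum_mul]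
      congr 1
      exact Finset.sum_congr rfl fun k _ => by ring
    rw [e, integral_add
        (integrable_finset_sum _ fun k _ => (my_mul_int (hXt2 k) hg).const_mul (c i k))
        (my_mul_int (hN2 i) hg),
      integral_finset_sum _ fun k _ => (my_mul_int (hXt2 k) hg).const_mul (c i k)]
    congr 1
    exact Finset.sum_congr rfl fun k _ => integral_const_mul _ _
  have hsymK : ∀ i j, K i j = K j i := by
    intro i j
    rw [hK, hK]
    exact integral_congr_ae (Filter.Eventually.of_forall fun ω => mul_comm _ _)
  have hBsq : ∀ i : Fin M, 0 < i →
      ∫ ω, (B i ω) ^ 2 ∂μ = K i i - ∑ j ∈ Finset.Iio i, c i j * K j i := by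
    intro i hi
    have hBX : ∀ k : Fin M, ∫ ω, B i ω * X k ω ∂μ
        = K i k - ∑ j ∈ Finset.Iio i, c i j * K j k := by
      intro k
      have e : (fun ω => B i ω * X k ω)
          = fun ω => X i ω * X k ω - ∑ j ∈ Finset.Iio i, c i j * (X j ω * X k ω) := by
        funext ω
        simp only [hB]
        rw [sub_mul, Finset.sum_mul]
        congr 1
        exact Finset.sum_congr rfl fun j _ => by ring
      rw [e, integral_sub (my_mul_int (hX2 i) (hX2 k))
          (integrable_finset_sum _ fun j _ => (my_mul_int (hX2 j) (hX2 k)).const_mul _),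
        integral_finset_sum _ fun j _ => (my_mul_int (hX2 j) (hX2 k)).const_mul _]
      congr 1
      · exact (hK i k).symm
      · refine Finset.sum_congr rfl fun j _ => ?_
        rw [integral_const_mul, ← hK]
    have e : (fun ω => (B i ω) ^ 2)
        = fun ω => B i ω * X i ω - ∑ j ∈ Finset.Iio i, c i j * (B i ω * X j ω) := by
      funext ω
      have h1 : (B i ω) ^ 2 = B i ω * X i ω - B i ω * ∑ j ∈ Finset.Iio i, c i j * X j ω := by
        simp only [hB]; ring
      rw [h1, Finset.mul_sum]
      congr 1
      exact Finset.sum_congr rfl fun j _ => by ring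
    have hB2 : MemLp (B i) 2 μ := by
      have h1 : MemLp (fun ω => ∑ j ∈ Finset.Iio i, c i j * X j ω) 2 μ :=
        memLp_finset_sum _ fun j _ => (hX2 j).const_mul (c i j)
      rw [hB i]
      exact (hX2 i).sub h1
    rw [e, integral_sub (my_mul_int hB2 (hX2 i))
        (integrable_finset_sum _ fun j _ => (my_mul_int hB2 (hX2 j)).const_mul _),
      integral_finset_sum _ fun j _ => (my_mul_int hB2 (hX2 j)).const_mul _]
    have h2 : ∑ j ∈ Finset.Iio i, ∫ ω, c i j * (B i ω * X j ω) ∂μ = 0 := by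
      refine Finset.sum_eq_zero fun j hj => ?_
      rw [integral_const_mul, hBX j, hc i j (Finset.mem_Iio.mp hj), sub_self, mul_zero]
    rw [h2, sub_zero, hBX i]
  have hNXt : ∀ i : Fin M, 0 < i →
      ∫ ω, N i ω * Xt i ω ∂μ = K i i - ∑ j ∈ Finset.Iio i, c i j * K j i := by
    intro i hi
    have e : (fun ω => N i ω * Xt i ω)
        = fun ω => (∑ j ∈ Finset.Iio i, c i j * (N i ω * Xt j ω)) + (N i ω) ^ 2 := by
      funext ω
      rw [hXtrec i hi]
      simp only []
      rw [mul_add, Finset.mul_sum]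
      congr 1
      · exact Finset.sum_congr rfl fun j _ => by ring
      · ring
    rw [e, integral_add
        (integrable_finset_sum _ fun j _ => (my_mul_int (hN2 i) (hXt2 j)).const_mul _)
        (hN2 i).integrable_sq,
      integral_finset_sum _ fun j _ => (my_mul_int (hN2 i) (hXt2 j)).const_mul _]
    have h0 : ∑ j ∈ Finset.Iio i, ∫ ω, c i j * (N i ω * Xt j ω) ∂μ = 0 := by
      refine Finset.sum_eq_zero fun j hj => ?_
      rw [integral_const_mul, hNorth i j hi (Finset.mem_Iio.mp hj), mul_zero]
    rw [h0, zero_add, hNvar i hi, hBsq i hi]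
  have hcov : ∀ n : ℕ, ∀ i j : Fin M, i.val = n → j ≤ i →
      ∫ ω, Xt i ω * Xt j ω ∂μ = K i j := by
    intro n
    induction n using Nat.strong_induction_on with
    | _ n IH =>
      intro i j hn hji
      by_cases hi0 : i = 0
      · subst hi0
        have hj0 : j = 0 := le_antisymm hji (Fin.zero_le j)
        subst hj0
        rw [hXt0, ← hK]
      · have hi : 0 < i := (Fin.pos_iff_ne_zero' i).mpr hi0
        have IH2 : ∀ k l : Fin M, k < i → l < i → ∫ ω, Xt k ω * Xt l ω ∂μ = K k l := by
          intro k l hk hl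
          rcases le_total l k with h | h
          · exact IH k.val (hn ▸ Fin.lt_iff_val_lt_val.mp hk) k l rfl h
          · have h1 := IH l.val (hn ▸ Fin.lt_iff_val_lt_val.mp hl) l k rfl h
            rw [show (fun ω => Xt k ω * Xt l ω) = fun ω => Xt l ω * Xt k ω from
              funext fun ω => mul_comm _ _, h1, hsymK]
        rcases lt_or_eq_of_le hji with hj | hj
        · rw [key i (Xt j) hi (hXt2 j)]
          have h1 : ∑ k ∈ Finset.Iio i, c i k * ∫ ω, Xt k ω * Xt j ω ∂μ
              = ∑ k ∈ Finset.Iio i, c i k * K k j :=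
            Finset.sum_congr rfl fun k hk => by rw [IH2 k j (Finset.mem_Iio.mp hk) hj]
          rw [h1, hNorth i j hi hj, add_zero, hc i j hj]
        · subst hj
          have hXtkXti : ∀ k : Fin M, k < j → ∫ ω, Xt k ω * Xt j ω ∂μ = K j k := by
            intro k hk
            rw [show (fun ω => Xt k ω * Xt j ω) = fun ω => Xt j ω * Xt k ω from
              funext fun ω => mul_comm _ _, key j (Xt k) hi (hXt2 k)]
            have h1 : ∑ l ∈ Finset.Iio j, c j l * ∫ ω, Xt l ω * Xt k ω ∂μ
                = ∑ l ∈ Finset.Iio j, c j l * K l k :=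
              Finset.sum_congr rfl fun l hl => by rw [IH2 l k (Finset.mem_Iio.mp hl) hk]
            rw [h1, hNorth j k hi hk, add_zero, hc j k hk]
          rw [key j (Xt j) hi (hXt2 j), hNXt j hi]
          have h2 : ∑ k ∈ Finset.Iio j, c j k * ∫ ω, Xt k ω * Xt j ω ∂μ
              = ∑ k ∈ Finset.Iio j, c j k * K k j := by
            refine Finset.sum_congr rfl fun k hk => ?_
            rw [hXtkXti k (Finset.mem_Iio.mp hk), hsymK]
          rw [h2]
          ring
  refine ⟨hXtmean, fun i j => ?_⟩
  rcases le_total j i with h | h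
  · exact hcov i.val i j rfl h
  · rw [show (fun ω => Xt i ω * Xt j ω) = fun ω => Xt j ω * Xt i ω from
      funext fun ω => mul_comm _ _, hcov j.val j i rfl h, hsymK]
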